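/- In the extended double loop group (SL₂(ℤ) ⋉ 𝕋²) ⋉ L²T, conjugation of an element (1, r, t) of the maximal torus 𝕋² × T (translations and constant loops) by (A, 0, m), where m ∈ Ť² is viewed as the homomorphism loop γ(s) = ms, yields (1, Ar, t + mr); in particular the subgroup SL₂(ℤ) ⋉ Ť² normalizes 𝕋² × T. -/

import Mathlib

noncomputable section

/-- The parametrised torus `𝕋² = ℝ²/ℤ²`. -/
abbrev T2 : Type := Fin 2 → UnitAddCircle

/-- Action of an integer matrix on `𝕋²`. -/
def matVec (A : Matrix (Fin 2) (Fin 2) ℤ) (v : T2) : T2 :=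
  fun i => ∑ j, A i j • v j

abbrev SL2 := Matrix.SpecialLinearGroup (Fin 2) ℤ

/-- The multiplication of the extended double loop group `(SL₂(ℤ) ⋉ 𝕋²) ⋉ L²T`:
`(A',t',γ'(s))(A,t,γ(s)) = (A'A, A⁻¹t' + t, γ'(As+t) + γ(s))`. -/
def emul {T : Type} [AddCommGroup T] (g h : SL2 × T2 × (T2 → T)) :
    SL2 × T2 × (T2 → T) :=
  (g.1 * h.1,
    matVec ((h.1⁻¹ : SL2) : Matrix (Fin 2) (Fin 2) ℤ) g.2.1 + h.2.1,
    fun s => g.2.2 (matVec ((h.1 : SL2) : Matrix (Fin 2) (Fin 2) ℤ) s + h.2.1) + h.2.2 s)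

lemma matVec_one (v : T2) : matVec ((1 : SL2) : Matrix (Fin 2) (Fin 2) ℤ) v = v := by
  funext i
  simp [matVec, Matrix.one_apply]

/-- Conjugating an element `(1, r, c)` of the maximal torus `𝕋² × T`
(translations and constant loops) by `(A, 0, m)`, where `m ∈ Ť² = Hom(𝕋²,T)` is viewed as the
homomorphism loop `γ(s) = ms`, yields `(1, Ar, c + mr)`; in particular the subgroup
`SL₂(ℤ) ⋉ Ť²` normalizes `𝕋² × T`. -/
theorem stmt_7 {T : Type} [AddCommGroup T] [TopologicalSpace T]
    [IsTopologicalAddGroup T] [CompactSpace T]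
    (A : SL2) (m : ContinuousAddMonoidHom T2 T) (r : T2) (c : T) :
    emul (emul (A, (0 : T2), fun s => m s) ((1 : SL2), r, fun _ => c))
        (A⁻¹, (0 : T2), fun s => -(m (matVec ((A⁻¹ : SL2) : Matrix (Fin 2) (Fin 2) ℤ) s)))
      = ((1 : SL2), matVec (A : Matrix (Fin 2) (Fin 2) ℤ) r, fun _ => c + m r) := by
  simp only [emul, inv_inv, inv_one, mul_one, mul_inv_cancel, matVec_one, zero_add, add_zero]
  rw [Prod.mk.injEq, Prod.mk.injEq]
  refine ⟨rfl, rfl, ?_⟩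
  funext s
  rw [map_add]
  abel
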